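/- For every graph model G and every closed λ-term N, if ⟦N⟧^G ⊆ ⟦I⟧^G, where I = λx.x, then either N =β I or N is unsolvable. -/

import Mathlib

universe u v

/-- Untyped λ-terms in de Bruijn notation (over the countably infinite
supply of variables `ℕ`). -/
inductive Term : Type
  | var : ℕ → Term
  | app : Term → Term → Term
  | lam : Term → Term
  deriving DecidableEq

namespace Term

/-- Shift the free variables `≥ d` up by one. -/
def lift (d : ℕ) : Term → Term
  | var n => if n < d then var n else var (n + 1)
  | app M N => app (lift d M) (lift d N)
  | lam M => lam (lift (d + 1) M)

/-- Capture-avoiding substitution of `N` for the free variable `k`. -/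
def subst : Term → ℕ → Term → Term
  | var n, k, N => if n = k then N else if k < n then var (n - 1) else var n
  | app P Q, k, N => app (subst P k N) (subst Q k N)
  | lam P, k, N => lam (subst P (k + 1) (lift 0 N))

/-- One-step β-reduction. -/
inductive Step : Term → Term → Prop
  | beta (M N : Term) : Step (app (lam M) N) (subst M 0 N)
  | appL {M M' : Term} (N : Term) : Step M M' → Step (app M N) (app M' N)
  | appR (M : Term) {N N' : Term} : Step N N' → Step (app M N) (app M N')
  | abs {M M' : Term} : Step M M' → Step (lam M) (lam M')

/-- β-conversion: the least equivalence relation containing one-step β-reduction. -/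
inductive BetaConv : Term → Term → Prop
  | of {M N : Term} : Step M N → BetaConv M N
  | refl (M : Term) : BetaConv M M
  | symm {M N : Term} : BetaConv M N → BetaConv N M
  | trans {M N P : Term} : BetaConv M N → BetaConv N P → BetaConv M P

/-- All free variables are `< d`. -/
def BoundedBy : Term → ℕ → Prop
  | var n, d => n < d
  | app M N, d => BoundedBy M d ∧ BoundedBy N d
  | lam M, d => BoundedBy M (d + 1)

/-- Closed λ-terms. -/
def Closed (M : Term) : Prop := BoundedBy M 0

/-- Terms of the form `y M₁ ⋯ Mₖ` (a variable applied to arguments). -/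
inductive IsVarApp : Term → Prop
  | var (n : ℕ) : IsVarApp (var n)
  | app {M : Term} (N : Term) : IsVarApp M → IsVarApp (app M N)

/-- Head normal forms `λx₁…xₙ. y M₁ ⋯ Mₖ`. -/
inductive IsHnf : Term → Prop
  | head {M : Term} : IsVarApp M → IsHnf M
  | abs {M : Term} : IsHnf M → IsHnf (lam M)

/-- A λ-term is solvable if it is β-convertible to a head normal form. -/
def Solvable (M : Term) : Prop := ∃ N, BetaConv M N ∧ IsHnf N

/-- Unsolvable λ-terms. -/
def Unsolvable (M : Term) : Prop := ¬ Solvable M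

/-- β-normal forms: terms containing no β-redex. -/
def IsNormal : Term → Prop
  | var _ => True
  | lam M => IsNormal M
  | app M N => (∀ P, M ≠ lam P) ∧ IsNormal M ∧ IsNormal N

/-- A fixed effective bijective Gödel numbering of λ-terms. -/
def code : Term → ℕ
  | var n => 3 * n
  | app M N => 3 * Nat.pair (code M) (code N) + 1
  | lam M => 3 * code M + 2

/-- `δ = λx.xx`. -/
def delta : Term := lam (app (var 0) (var 0))

/-- `Ω = (λx.xx)(λx.xx)`. -/
def Omega : Term := app delta delta

/-- `I = λx.x`. -/
def Idt : Term := lam (var 0)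

end Term

open Term

/-- A set of λ-terms is r.e. if its set of Gödel codes is r.e. -/
def TermSetRe (V : Set Term) : Prop := REPred fun n : ℕ => ∃ M ∈ V, code M = n

/-- A set of λ-terms is co-r.e. if its set of Gödel codes is co-r.e.; since the
numbering is bijective this means that the code set of the complement is r.e. -/
def TermSetCoRe (V : Set Term) : Prop := TermSetRe Vᶜ

/-- β-co-r.e. sets: co-r.e. sets of λ-terms closed under β-conversion. -/
def BetaCoRe (V : Set Term) : Prop :=
  (∀ M N, M ∈ V → BetaConv M N → N ∈ V) ∧ TermSetCoRe V

/-- A set of pairs of λ-terms is r.e. if the corresponding set of codes of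
pairs is r.e. -/
def PairsRe (T : Set (Term × Term)) : Prop :=
  REPred fun n : ℕ => ∃ p ∈ T, Nat.pair (code p.1) (code p.2) = n

/-- λ-theories: congruences on Λ containing β-conversion. -/
def IsLambdaTheory (T : Term → Term → Prop) : Prop :=
  Equivalence T ∧
  (∀ M M' N N', T M M' → T N N' → T (Term.app M N) (Term.app M' N')) ∧
  (∀ M M', T M M' → T (Term.lam M) (Term.lam M')) ∧
  (∀ M N, BetaConv M N → T M N)

/-- Partial pairs (as raw data): a carrier set together with a partial map `j`,
given as an `Option`-valued map on pairs of a subset and an element. -/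
structure PrePair (α : Type u) : Type u where
  carrier : Set α
  j : Set α × α → Option α

namespace PrePair

variable {α : Type u}

/-- The defining conditions of a partial pair: the carrier is non-empty and `j`
is a partial injection `A* × A ⇀ A`. -/
def Valid (P : PrePair α) : Prop :=
  P.carrier.Nonempty ∧
  (∀ a x y, P.j (a, x) = some y →
      a.Finite ∧ a ⊆ P.carrier ∧ x ∈ P.carrier ∧ y ∈ P.carrier) ∧
  (∀ p q y, P.j p = some y → P.j q = some y → p = q)

/-- Total pairs: `j` is defined on every pair of a finite subset of the
carrier and an element of the carrier. -/
def Total (P : PrePair α) : Prop :=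
  ∀ a x, a.Finite → a ⊆ P.carrier → x ∈ P.carrier → ∃ y, P.j (a, x) = some y

/-- Webs of graph models: total pairs with infinite carrier. -/
def IsGraphModel (P : PrePair α) : Prop := P.Valid ∧ P.Total ∧ P.carrier.Infinite

/-- The subpair relation `A ⊑ B`. -/
def Subpair (P Q : PrePair α) : Prop :=
  P.carrier ⊆ Q.carrier ∧ ∀ p y, P.j p = some y → Q.j p = some y

end PrePair

/-- Consing a value onto an environment (de Bruijn style). -/
def envCons {α : Type u} (s : Set α) (ρ : ℕ → Set α) : ℕ → Set α
  | 0 => s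
  | n + 1 => ρ n

/-- The interpretation of a λ-term with respect to a partial pair and an
environment. -/
def interp {α : Type u} (P : PrePair α) : Term → (ℕ → Set α) → Set α
  | Term.var n, ρ => ρ n
  | Term.app M N, ρ =>
      {y | ∃ a : Set α, a.Finite ∧ a ⊆ interp P N ρ ∧
        ∃ z, P.j (a, y) = some z ∧ z ∈ interp P M ρ}
  | Term.lam M, ρ =>
      {y | ∃ (a : Set α) (x : α), a.Finite ∧ P.j (a, x) = some y ∧
        x ∈ interp P M (envCons a ρ)}

/-- The interpretation of a closed λ-term. -/
def interpC {α : Type u} (P : PrePair α) (M : Term) : Set α :=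
  interp P M fun _ => (∅ : Set α)

/-- The order theory of (the graph model generated by) a pair. -/
def ThLe {α : Type u} (P : PrePair α) : Set (Term × Term) :=
  {p | ∀ ρ : ℕ → Set α, (∀ n, ρ n ⊆ P.carrier) → interp P p.1 ρ ⊆ interp P p.2 ρ}

/-- The equational theory of (the graph model generated by) a pair. -/
def Th {α : Type u} (P : PrePair α) : Set (Term × Term) :=
  {p | ∀ ρ : ℕ → Set α, (∀ n, ρ n ⊆ P.carrier) → interp P p.1 ρ = interp P p.2 ρ}

/-- Morphisms of partial pairs. -/
def IsMorphism {α : Type u} {β : Type v} (P : PrePair α) (Q : PrePair β)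
    (f : α → β) : Prop :=
  Set.MapsTo f P.carrier Q.carrier ∧
  ∀ a x y, a ⊆ P.carrier → x ∈ P.carrier → P.j (a, x) = some y →
    Q.j (f '' a, f x) = some (f y)

/-- Isomorphisms of partial pairs: morphisms which are bijections between the
carriers and whose inverse is also a morphism. -/
def IsIso {α : Type u} {β : Type v} (P : PrePair α) (Q : PrePair β)
    (f : α → β) : Prop :=
  IsMorphism P Q f ∧
  ∃ g : β → α, IsMorphism Q P g ∧
    (∀ x ∈ P.carrier, g (f x) = x) ∧ ∀ y ∈ Q.carrier, f (g y) = y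

/-- The ambient type of the free completion: formal copies `base x` of the
original elements together with formal pairs `node`. -/
inductive FC (α : Type u) : Type u
  | base : α → FC α
  | node : List (FC α) → FC α → FC α

namespace FC

variable {α : Type u}

open scoped Classical

/-- A canonical list enumerating a finite set. -/
noncomputable def listOf (s : Set (FC α)) : List (FC α) :=
  if h : s.Finite then h.toFinset.toList else []

/-- The copy of the original carrier inside `FC α`. -/
def baseSet (P : PrePair α) : Set (FC α) := base '' P.carrier

/-- `(a, x)` is the copy of a pair in the domain of `j`. -/
def IsOldDom (P : PrePair α) (a : Set (FC α)) (x : FC α) : Prop :=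
  ∃ (a₀ : Set α) (x₀ : α), a = base '' a₀ ∧ x = base x₀ ∧ (P.j (a₀, x₀)).isSome

/-- The increasing stages `Aₙ` of the free completion:
`A₀ = A` and `A_{n+1} = A ∪ ((Aₙ* × Aₙ) ∖ dom j)`. -/
def stage (P : PrePair α) : ℕ → Set (FC α)
  | 0 => baseSet P
  | n + 1 => baseSet P ∪
      {t | ∃ (a : Set (FC α)) (x : FC α), a.Finite ∧ a ⊆ stage P n ∧
        x ∈ stage P n ∧ ¬ IsOldDom P a x ∧ t = node (listOf a) x}

/-- The carrier `Ā = ⋃ₙ Aₙ` of the free completion. -/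
def compCarrier (P : PrePair α) : Set (FC α) := ⋃ n, stage P n

/-- `y` is the copy of the old value `j (a₀, x₀)`, where `(a, x)` is the copy
of `(a₀, x₀) ∈ dom j`. -/
def OldVal (P : PrePair α) (a : Set (FC α)) (x y : FC α) : Prop :=
  ∃ (a₀ : Set α) (x₀ y₀ : α), a = base '' a₀ ∧ x = base x₀ ∧
    P.j (a₀, x₀) = some y₀ ∧ y = base y₀

/-- The total injection `j̄` of the free completion: it extends `j` and sends
every other pair `(a, α)` of the completion to (the formal copy of) itself. -/
noncomputable def jbar (P : PrePair α) (p : Set (FC α) × FC α) : Option (FC α) :=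
  if p.1.Finite ∧ p.1 ⊆ compCarrier P ∧ p.2 ∈ compCarrier P then
    if h : ∃ y, OldVal P p.1 p.2 y then some h.choose
    else some (node (listOf p.1) p.2)
  else none

end FC

/-- The free completion `Ā` of a partial pair `A`, as a total pair on `FC α`. -/
noncomputable def completion {α : Type u} (P : PrePair α) : PrePair (FC α) :=
  ⟨FC.compCarrier P, FC.jbar P⟩

/-- The fixed effective encoding of finite subsets of `ℕ`. -/
def encF (s : Finset ℕ) : ℕ := s.sum fun i => 2 ^ i

/-- A partial pair on `ℕ` whose carrier is a decidable set and whose map `j` is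
partial recursive with decidable domain (under the fixed effective encoding of
finite sets and pairs). -/
def ConcreteWE (Q : PrePair ℕ) : Prop :=
  ComputablePred (· ∈ Q.carrier) ∧
  ∃ f : ℕ →. ℕ, Nat.Partrec f ∧ ComputablePred (fun n => (f n).Dom) ∧
    ∀ (a : Finset ℕ) (x y : ℕ), Q.j (↑a, x) = some y ↔ y ∈ f (Nat.pair (encF a) x)

/-- The range of `j` is decidable. -/
def ConcreteRange (Q : PrePair ℕ) : Prop :=
  ComputablePred fun y => ∃ p, Q.j p = some y

/-- Weakly effective partial pairs: partial pairs isomorphic to a partial pair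
on `ℕ` with decidable carrier whose `j` is partial recursive with decidable
domain. -/
def WeaklyEffective {α : Type u} (P : PrePair α) : Prop :=
  ∃ Q : PrePair ℕ, ConcreteWE Q ∧ ∃ f : α → ℕ, IsIso P Q f

/-- Effective partial pairs: weakly effective via a pair whose `j` moreover has
decidable range. -/
def EffectivePair {α : Type u} (P : PrePair α) : Prop :=
  ∃ Q : PrePair ℕ, ConcreteWE Q ∧ ConcreteRange Q ∧ ∃ f : α → ℕ, IsIso P Q f

/-- Effective total pairs: total pairs isomorphic to some `(ℕ, ℓ)` with `ℓ`
total recursive, injective and with decidable range. -/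
def EffectiveTotalPair {α : Type u} (P : PrePair α) : Prop :=
  ∃ Q : PrePair ℕ, Q.carrier = Set.univ ∧
    (∃ f : ℕ → ℕ, Computable f ∧ Function.Injective f ∧
      ComputablePred (fun y => ∃ n, f n = y) ∧
      ∀ (a : Finset ℕ) (x : ℕ), Q.j (↑a, x) = some (f (Nat.pair (encF a) x))) ∧
    ∃ h : α → ℕ, IsIso P Q h
section Aux

variable {α : Type u} {G : PrePair α}

open Classical in
/-- A choice function for the (partial) pairing map. -/
noncomputable def jf (G : PrePair α) (a : Set α) (x : α) : α :=
  if h : ∃ y, G.j (a, x) = some y then h.choose else x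

lemma jf_spec (hv : G.Valid) (ht : G.Total) {a : Set α} {x : α}
    (ha : a.Finite) (haC : a ⊆ G.carrier) (hx : x ∈ G.carrier) :
    G.j (a, x) = some (jf G a x) ∧ jf G a x ∈ G.carrier := by
  obtain ⟨y, hy⟩ := ht a x ha haC hx
  have hex : ∃ y, G.j (a, x) = some y := ⟨y, hy⟩
  have heq : jf G a x = hex.choose := dif_pos hex
  have hspec := hex.choose_spec
  rw [← heq] at hspec
  exact ⟨hspec, (hv.2.1 _ _ _ hspec).2.2.2⟩

lemma j_inj (hv : G.Valid) {a b : Set α} {x y z : α}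
    (h1 : G.j (a, x) = some z) (h2 : G.j (b, y) = some z) : a = b ∧ x = y := by
  have h := hv.2.2 _ _ _ h1 h2
  exact ⟨congrArg Prod.fst h, congrArg Prod.snd h⟩

lemma interp_subset_carrier (hv : G.Valid) :
    ∀ (M : Term) (ρ : ℕ → Set α), (∀ n, ρ n ⊆ G.carrier) →
      interp G M ρ ⊆ G.carrier
  | Term.var n, ρ, hρ => hρ n
  | Term.app M N, ρ, _ => fun y hy => by
      obtain ⟨a, _, _, z, hz, _⟩ := hy
      exact (hv.2.1 _ _ _ hz).2.2.1
  | Term.lam M, ρ, _ => fun y hy => by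
      obtain ⟨a, x, _, hj, _⟩ := hy
      exact (hv.2.1 _ _ _ hj).2.2.2

lemma interp_mono : ∀ (M : Term) (ρ ρ' : ℕ → Set α), (∀ n, ρ n ⊆ ρ' n) →
    interp G M ρ ⊆ interp G M ρ'
  | Term.var n, _, _, h => h n
  | Term.app M N, ρ, ρ', h => fun y hy => by
      obtain ⟨a, hfin, hsub, z, hj, hz⟩ := hy
      exact ⟨a, hfin, hsub.trans (interp_mono N ρ ρ' h), z, hj,
        interp_mono M ρ ρ' h hz⟩
  | Term.lam M, ρ, ρ', h => fun y hy => by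
      obtain ⟨a, x, hfin, hj, hx⟩ := hy
      refine ⟨a, x, hfin, hj, interp_mono M _ _ ?_ hx⟩
      intro n
      cases n with
      | zero => exact subset_rfl
      | succ m => exact h m

lemma interp_boundedBy : ∀ (M : Term) (d : ℕ) (ρ ρ' : ℕ → Set α),
    Term.BoundedBy M d → (∀ n, n < d → ρ n = ρ' n) →
    interp G M ρ = interp G M ρ'
  | Term.var n, d, ρ, ρ', hb, h => h n hb
  | Term.app M N, d, ρ, ρ', hb, h => by
      simp only [interp]
      rw [interp_boundedBy M d ρ ρ' hb.1 h, interp_boundedBy N d ρ ρ' hb.2 h]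
  | Term.lam M, d, ρ, ρ', hb, h => by
      have key : ∀ a : Set α, interp G M (envCons a ρ) = interp G M (envCons a ρ') := by
        intro a
        refine interp_boundedBy M (d + 1) _ _ hb ?_
        intro n hn
        cases n with
        | zero => rfl
        | succ m => exact h m (Nat.lt_of_succ_lt_succ hn)
      simp only [interp, key]

lemma interp_cont : ∀ (M : Term) (ρ : ℕ → Set α) (n₀ : ℕ) (y : α),
    y ∈ interp G M ρ → ∃ a : Set α, a.Finite ∧ a ⊆ ρ n₀ ∧
      y ∈ interp G M (fun n => if n = n₀ then a else ρ n)
  | Term.var n, ρ, n₀, y, hy => by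
      by_cases h : n = n₀
      · subst h
        exact ⟨{y}, Set.finite_singleton y, Set.singleton_subset_iff.2 hy, by
          simp [interp]⟩
      · exact ⟨∅, Set.finite_empty, Set.empty_subset _, by simp [interp, h]; exact hy⟩
  | Term.app M N, ρ, n₀, y, hy => by
      obtain ⟨b, hbfin, hbsub, z, hj, hz⟩ := hy
      obtain ⟨a₁, ha₁f, ha₁s, hz'⟩ := interp_cont M ρ n₀ z hz
      have hch : ∀ w : α, ∃ c : Set α, c.Finite ∧ c ⊆ ρ n₀ ∧
          (w ∈ b → w ∈ interp G N (fun n => if n = n₀ then c else ρ n)) := by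
        intro w
        by_cases hw : w ∈ b
        · obtain ⟨c, h1, h2, h3⟩ := interp_cont N ρ n₀ w (hbsub hw)
          exact ⟨c, h1, h2, fun _ => h3⟩
        · exact ⟨∅, Set.finite_empty, Set.empty_subset _, fun hc => absurd hc hw⟩
      choose f hf1 hf2 hf3 using hch
      refine ⟨a₁ ∪ ⋃ w ∈ b, f w, ha₁f.union (hbfin.biUnion fun w _ => hf1 w),
        Set.union_subset ha₁s (Set.iUnion₂_subset fun w _ => hf2 w), ?_⟩
      have hmono : ∀ c : Set α, c ⊆ a₁ ∪ ⋃ w ∈ b, f w →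
          (∀ n, (if n = n₀ then c else ρ n) ⊆
            (if n = n₀ then a₁ ∪ ⋃ w ∈ b, f w else ρ n)) := by
        intro c hc n
        by_cases hn : n = n₀ <;> simp [hn, hc]
      refine ⟨b, hbfin, ?_, z, hj, ?_⟩
      · intro w hw
        refine interp_mono N _ _ (hmono (f w) ?_) (hf3 w hw)
        exact (Set.subset_biUnion_of_mem hw).trans Set.subset_union_right
      · exact interp_mono M _ _ (hmono a₁ Set.subset_union_left) hz'
  | Term.lam M, ρ, n₀, y, hy => by
      obtain ⟨b, x, hbf, hj, hx⟩ := hy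
      obtain ⟨a, haf, has, hx'⟩ := interp_cont M (envCons b ρ) (n₀ + 1) x hx
      refine ⟨a, haf, has, b, x, hbf, hj, ?_⟩
      have henv : (fun n => if n = n₀ + 1 then a else envCons b ρ n)
          = envCons b (fun n => if n = n₀ then a else ρ n) := by
        funext n
        cases n with
        | zero => simp [envCons]
        | succ m => simp [envCons]
      rwa [henv] at hx'

lemma interp_lift : ∀ (M : Term) (d : ℕ) (ρ : ℕ → Set α),
    interp G (Term.lift d M) ρ
      = interp G M (fun n => if n < d then ρ n else ρ (n + 1))
  | Term.var n, d, ρ => by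
      by_cases h : n < d <;> simp [Term.lift, h, interp]
  | Term.app M N, d, ρ => by
      simp only [Term.lift, interp, interp_lift M d ρ, interp_lift N d ρ]
  | Term.lam M, d, ρ => by
      have key : ∀ a : Set α, interp G (Term.lift (d + 1) M) (envCons a ρ)
          = interp G M (envCons a (fun n => if n < d then ρ n else ρ (n + 1))) := by
        intro a
        have henv : (fun n => if n < d + 1 then envCons a ρ n else envCons a ρ (n + 1))
            = envCons a (fun n => if n < d then ρ n else ρ (n + 1)) := by
          funext n
          cases n with
          | zero => simp [envCons]
          | succ m =>
            by_cases h : m < d <;>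
              simp [envCons, h, Nat.succ_lt_succ_iff]
        rw [interp_lift M (d + 1) (envCons a ρ), henv]
      simp only [Term.lift, interp, key]

lemma interp_subst : ∀ (M : Term) (k : ℕ) (N : Term) (ρ : ℕ → Set α),
    interp G (Term.subst M k N) ρ = interp G M
      (fun n => if n < k then ρ n else if n = k then interp G N ρ else ρ (n - 1))
  | Term.var n, k, N, ρ => by
      rcases lt_trichotomy n k with h | h | h
      · have h1 : n ≠ k := Nat.ne_of_lt h
        have h2 : ¬ k < n := by omega
        simp [Term.subst, h, h1, h2, interp]
      · subst h
        simp [Term.subst, interp]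
      · have h1 : n ≠ k := by omega
        have h2 : ¬ n < k := by omega
        simp [Term.subst, h, h1, h2, interp]
  | Term.app P Q, k, N, ρ => by
      simp only [Term.subst, interp, interp_subst P k N ρ, interp_subst Q k N ρ]
  | Term.lam P, k, N, ρ => by
      have key : ∀ a : Set α,
          interp G (Term.subst P (k + 1) (Term.lift 0 N)) (envCons a ρ)
          = interp G P (envCons a (fun n => if n < k then ρ n
              else if n = k then interp G N ρ else ρ (n - 1))) := by
        intro a
        rw [interp_subst P (k + 1) (Term.lift 0 N) (envCons a ρ)]
        have hN : interp G (Term.lift 0 N) (envCons a ρ) = interp G N ρ := by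
          have henv0 : (fun n => if n < 0 then envCons a ρ n else envCons a ρ (n + 1)) = ρ := by
            funext n
            simp [envCons]
          rw [interp_lift N 0 (envCons a ρ), henv0]
        rw [hN]
        have henv : (fun n => if n < k + 1 then envCons a ρ n
            else if n = k + 1 then interp G N ρ else envCons a ρ (n - 1))
            = envCons a (fun n => if n < k then ρ n
              else if n = k then interp G N ρ else ρ (n - 1)) := by
          funext n
          cases n with
          | zero => simp [envCons]
          | succ m =>
            by_cases h1 : m < k
            · have : m + 1 < k + 1 := by omega
              simp [envCons, h1, this]
            · by_cases h2 : m = k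
              · subst h2
                simp [envCons, h1]
              · have e1 : ¬ (m + 1 < k + 1) := by omega
                have e2 : ¬ (m + 1 = k + 1) := by omega
                have e3 : m + 1 - 1 = m := by omega
                obtain ⟨m', rfl⟩ : ∃ m', m = m' + 1 := ⟨m - 1, by omega⟩
                simp only [e1, e2, if_neg, if_false, e3]
                simp [envCons, h1, h2]
        rw [henv]
      simp only [Term.subst, interp, key]

lemma step_sound (hv : G.Valid) (ht : G.Total) {M M' : Term}
    (hstep : Term.Step M M') :
    ∀ ρ : ℕ → Set α, (∀ n, ρ n ⊆ G.carrier) → interp G M ρ = interp G M' ρ := by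
  induction hstep with
  | beta P Q =>
    intro ρ hρ
    rw [interp_subst]
    have henv : (fun n => if n < 0 then ρ n
        else if n = 0 then interp G Q ρ else ρ (n - 1)) = envCons (interp G Q ρ) ρ := by
      funext n
      cases n with
      | zero => simp [envCons]
      | succ m => simp [envCons]
    rw [henv]
    ext y
    constructor
    · rintro ⟨a, haf, has, z, hj, b, x, hbf, hj', hx⟩
      obtain ⟨h1, h2⟩ := j_inj hv hj hj'
      subst h1; subst h2
      refine interp_mono P _ _ ?_ hx
      intro n
      cases n with
      | zero => exact has
      | succ m => exact subset_rfl
    · intro hy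
      obtain ⟨a, haf, has, hy'⟩ := interp_cont P (envCons (interp G Q ρ) ρ) 0 y hy
      have has' : a ⊆ interp G Q ρ := has
      have henv2 : (fun n => if n = 0 then a else envCons (interp G Q ρ) ρ n)
          = envCons a ρ := by
        funext n
        cases n with
        | zero => simp [envCons]
        | succ m => simp [envCons]
      rw [henv2] at hy'
      have haC : a ⊆ G.carrier := has'.trans (interp_subset_carrier hv Q ρ hρ)
      have hyC : y ∈ G.carrier := by
        refine interp_subset_carrier hv P (envCons a ρ) ?_ hy'
        intro n
        cases n with
        | zero => exact haC
        | succ m => exact hρ m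
      obtain ⟨hjy, _⟩ := jf_spec hv ht haf haC hyC
      exact ⟨a, haf, has', jf G a y, hjy, a, y, haf, hjy, hy'⟩
  | appL N _ ih =>
    intro ρ hρ
    simp only [interp, ih ρ hρ]
  | appR M _ ih =>
    intro ρ hρ
    simp only [interp, ih ρ hρ]
  | abs _ ih =>
    intro ρ hρ
    ext y
    simp only [interp, Set.mem_setOf_eq]
    constructor <;> rintro ⟨a, x, haf, hj, hx⟩ <;> refine ⟨a, x, haf, hj, ?_⟩
    · rwa [← ih (envCons a ρ) ?_]
      intro n
      cases n with
      | zero => exact (hv.2.1 _ _ _ hj).2.1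
      | succ m => exact hρ m
    · rwa [ih (envCons a ρ) ?_]
      intro n
      cases n with
      | zero => exact (hv.2.1 _ _ _ hj).2.1
      | succ m => exact hρ m

lemma conv_sound (hv : G.Valid) (ht : G.Total) {M N : Term}
    (hconv : Term.BetaConv M N) :
    ∀ ρ : ℕ → Set α, (∀ n, ρ n ⊆ G.carrier) → interp G M ρ = interp G N ρ := by
  induction hconv with
  | of h => exact step_sound hv ht h
  | refl M => intro ρ _; rfl
  | symm _ ih => intro ρ hρ; exact (ih ρ hρ).symm
  | trans _ _ ih1 ih2 => intro ρ hρ; exact (ih1 ρ hρ).trans (ih2 ρ hρ)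

lemma interp_closed (hN : Term.Closed N) (ρ : ℕ → Set α) :
    interp G N ρ = interpC G N :=
  interp_boundedBy N 0 ρ (fun _ => ∅) hN (fun n hn => absurd hn (Nat.not_lt_zero n))

lemma mem_interpC_Idt {y : α} : y ∈ interpC G Term.Idt ↔
    ∃ (a : Set α) (x : α), a.Finite ∧ G.j (a, x) = some y ∧ x ∈ a :=
  Iff.rfl

/-- Iterated abstraction. -/
def lamIter : ℕ → Term → Term
  | 0, B => B
  | n + 1, B => Term.lam (lamIter n B)

lemma hnf_decomp {H : Term} (h : Term.IsHnf H) :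
    ∃ n B, Term.IsVarApp B ∧ H = lamIter n B := by
  induction h with
  | head hB => exact ⟨0, _, hB, rfl⟩
  | abs _ ih =>
    obtain ⟨n, B, hB, rfl⟩ := ih
    exact ⟨n + 1, B, hB, rfl⟩

/-- Iterated pairing tower. -/
noncomputable def tow (G : PrePair α) (τ : ℕ → Set α) : ℕ → α → α
  | 0, x => x
  | m + 1, x => jf G (τ m) (tow G τ m x)

lemma tow_mem (hv : G.Valid) (ht : G.Total) {τ : ℕ → Set α}
    (hτ : ∀ i, (τ i).Finite ∧ τ i ⊆ G.carrier) {x : α} (hx : x ∈ G.carrier) :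
    ∀ m, tow G τ m x ∈ G.carrier
  | 0 => hx
  | m + 1 => (jf_spec hv ht (hτ m).1 (hτ m).2 (tow_mem hv ht hτ hx m)).2

lemma lamIter_mem (hv : G.Valid) (ht : G.Total) {τ : ℕ → Set α}
    (hτ : ∀ i, (τ i).Finite ∧ τ i ⊆ G.carrier) {x : α} (hx : x ∈ G.carrier) :
    ∀ (m : ℕ) (B : Term) (σ : ℕ → Set α),
      x ∈ interp G B (fun i => if i < m then τ i else σ (i - m)) →
      tow G τ m x ∈ interp G (lamIter m B) σ := by
  intro m
  induction m with
  | zero =>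
    intro B σ hmem
    have henv : (fun i => if i < 0 then τ i else σ (i - 0)) = σ := by
      funext i; simp
    rw [henv] at hmem
    exact hmem
  | succ m ih =>
    intro B σ hmem
    refine ⟨τ m, tow G τ m x, (hτ m).1,
      (jf_spec hv ht (hτ m).1 (hτ m).2 (tow_mem hv ht hτ hx m)).1, ?_⟩
    apply ih B (envCons (τ m) σ)
    have henv : (fun i => if i < m + 1 then τ i else σ (i - (m + 1)))
        = (fun i => if i < m then τ i else envCons (τ m) σ (i - m)) := by
      funext i
      rcases lt_trichotomy i m with h | rfl | h
      · simp [h, Nat.lt_succ_of_lt h]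
      · simp [envCons]
      · have h1 : ¬ i < m + 1 := by omega
        have h2 : ¬ i < m := by omega
        have h3 : i - m = (i - (m + 1)) + 1 := by omega
        simp [h1, h2, h3, envCons]
    rwa [henv] at hmem

lemma varApp_struct (hv : G.Valid) (ht : G.Total) {B : Term}
    (hB : Term.IsVarApp B) :
    ∃ (v : ℕ) (T : α → α),
      (∀ x ∈ G.carrier, T x ∈ G.carrier) ∧
      (∀ (σ : ℕ → Set α) (x : α), x ∈ G.carrier → T x ∈ σ v → x ∈ interp G B σ) ∧
      ((B = Term.var v ∧ ∀ x, T x = x) ∨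
        (∀ x ∈ G.carrier, ∃ w, G.j (∅, w) = some (T x))) := by
  induction hB with
  | var n =>
    refine ⟨n, id, fun x hx => hx, ?_, Or.inl ⟨rfl, fun _ => rfl⟩⟩
    intro σ x _ hmem
    exact hmem
  | app N hM ih =>
    obtain ⟨v, T, hTC, hTmem, hca⟩ := ih
    have hS : ∀ x ∈ G.carrier, G.j (∅, x) = some (jf G ∅ x) ∧ jf G ∅ x ∈ G.carrier :=
      fun x hx => jf_spec hv ht Set.finite_empty (Set.empty_subset _) hx
    refine ⟨v, fun x => T (jf G ∅ x), ?_, ?_, Or.inr ?_⟩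
    · intro x hx
      exact hTC _ (hS x hx).2
    · intro σ x hx hmem
      exact ⟨∅, Set.finite_empty, Set.empty_subset _, jf G ∅ x, (hS x hx).1,
        hTmem σ (jf G ∅ x) (hS x hx).2 hmem⟩
    · intro x hx
      rcases hca with ⟨_, hid⟩ | hform
      · refine ⟨x, ?_⟩
        show G.j (∅, x) = some (T (jf G ∅ x))
        rw [hid (jf G ∅ x)]
        exact (hS x hx).1
      · exact hform _ (hS x hx).2

lemma hnf_eq_Idt (hG : G.IsGraphModel) {H : Term} (hH : Term.IsHnf H)
    (hsem : ∀ ρ : ℕ → Set α, (∀ n, ρ n ⊆ G.carrier) →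
      interp G H ρ ⊆ interpC G Term.Idt) :
    H = Term.Idt := by
  obtain ⟨hv, ht, hinf⟩ := hG
  obtain ⟨α0, hα0⟩ := hinf.nonempty
  -- key elements
  obtain ⟨hju, huC⟩ := jf_spec hv ht (a := ∅) Set.finite_empty (Set.empty_subset _) hα0
  set u := jf G ∅ α0 with hu
  have hα0fin : ({α0} : Set α).Finite := Set.finite_singleton α0
  have hα0sub : ({α0} : Set α) ⊆ G.carrier := Set.singleton_subset_iff.2 hα0
  obtain ⟨hjs, hsC⟩ := jf_spec hv ht hα0fin hα0sub hα0
  set s := jf G {α0} α0 with hs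
  -- u ∉ ⟦I⟧
  have huI : u ∉ interpC G Term.Idt := by
    intro hmem
    obtain ⟨a, x, haf, hj, hxa⟩ := mem_interpC_Idt.1 hmem
    obtain ⟨h1, h2⟩ := j_inj hv hju hj
    rw [← h1] at hxa
    exact absurd hxa (Set.notMem_empty x)
  obtain ⟨n, B, hB, rfl⟩ := hnf_decomp hH
  obtain ⟨v, T, hTC, hTmem, hca⟩ := varApp_struct hv ht hB
  -- case n = 0
  cases n with
  | zero =>
    exfalso
    set ρ : ℕ → Set α := fun i => if i = v then {T u} else ∅ with hρdef
    have hρ : ∀ i, ρ i ⊆ G.carrier := by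
      intro i
      by_cases h : i = v <;>
        simp [hρdef, h, Set.singleton_subset_iff.2 (hTC u huC), Set.empty_subset]
    have hmem : u ∈ interp G B ρ := by
      refine hTmem ρ u huC ?_
      simp [hρdef]
    exact huI (hsem ρ hρ hmem)
  | succ m =>
    -- main consequence of hsem
    have hstar : ∀ (τ : ℕ → Set α), (∀ i, (τ i).Finite ∧ τ i ⊆ G.carrier) →
        ∀ (ρ : ℕ → Set α), (∀ i, ρ i ⊆ G.carrier) →
        ∀ x ∈ G.carrier,
          x ∈ interp G B (fun i => if i < m + 1 then τ i else ρ (i - (m + 1))) →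
          tow G τ m x ∈ τ m := by
      intro τ hτ ρ hρ x hx hmem
      have h1 := lamIter_mem hv ht hτ hx (m + 1) B ρ hmem
      have h2 := hsem ρ hρ h1
      obtain ⟨a, x', haf, hj, hxa⟩ := mem_interpC_Idt.1 h2
      have hj' := (jf_spec hv ht (hτ m).1 (hτ m).2 (tow_mem hv ht hτ hx m)).1
      obtain ⟨h3, h4⟩ := j_inj hv hj hj'
      rw [h3, h4] at hxa
      exact hxa
    -- case analysis on v
    rcases lt_trichotomy v m with hvm | rfl | hvm
    · -- v < m : head variable bound by an inner lambda, not the outermost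
      exfalso
      set τ : ℕ → Set α := fun i => if i = v then {T u} else ∅ with hτdef
      have hτ : ∀ i, (τ i).Finite ∧ τ i ⊆ G.carrier := by
        intro i
        by_cases h : i = v <;>
          simp [hτdef, h, hα0fin, Set.singleton_subset_iff.2 (hTC u huC),
            Set.empty_subset, Set.finite_singleton, Set.finite_empty]
      have hmem : u ∈ interp G B
          (fun i => if i < m + 1 then τ i else (fun _ => (∅ : Set α)) (i - (m + 1))) := by
        refine hTmem _ u huC ?_
        have : v < m + 1 := by omega
        simp [this, hτdef]
      have := hstar τ hτ (fun _ => ∅) (fun _ => Set.empty_subset _) u huC hmem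
      have hne : m ≠ v := by omega
      simp [hτdef, hne] at this
    · -- v = m : head variable bound by the outermost lambda
      cases v with
      | zero =>
        -- n = 1, v = 0
        rcases hca with ⟨hBvar, _⟩ | hform
        · -- B = var 0 : H = lam (var 0) = Idt
          rw [hBvar]
          rfl
        · -- B has at least one argument: contradiction using s
          exfalso
          set τ : ℕ → Set α := fun _ => {T s} with hτdef
          have hτ : ∀ i, (τ i).Finite ∧ τ i ⊆ G.carrier := fun i =>
            ⟨Set.finite_singleton _, Set.singleton_subset_iff.2 (hTC s hsC)⟩
          have hmem : s ∈ interp G B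
              (fun i => if i < 1 then τ i else (fun _ => (∅ : Set α)) (i - 1)) := by
            refine hTmem _ s hsC ?_
            simp [hτdef]
          have hts := hstar τ hτ (fun _ => ∅) (fun _ => Set.empty_subset _) s hsC hmem
          -- hts : tow G τ 0 s = s ∈ τ 0 = {T s}
          have hseq : s = T s := by simpa [tow, hτdef] using hts
          obtain ⟨w, hw⟩ := hform s hsC
          rw [← hseq] at hw
          obtain ⟨h1, _⟩ := j_inj hv hjs hw
          exact absurd h1 (Set.singleton_ne_empty α0)
      | succ k =>
        -- n ≥ 2, v = m = k + 1
        exfalso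
        set τ : ℕ → Set α := fun i => if i = k + 1 then {T u} else if i = k then {α0} else ∅
          with hτdef
        have hτ : ∀ i, (τ i).Finite ∧ τ i ⊆ G.carrier := by
          intro i
          by_cases h1 : i = k + 1
          · simp [hτdef, h1, Set.finite_singleton,
              Set.singleton_subset_iff.2 (hTC u huC)]
          · by_cases h2 : i = k <;>
              simp [hτdef, h1, h2, hα0fin, hα0sub, Set.finite_empty, Set.empty_subset]
        have hmem : u ∈ interp G B
            (fun i => if i < k + 2 then τ i else (fun _ => (∅ : Set α)) (i - (k + 2))) := by
          refine hTmem _ u huC ?_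
          have h1 : k + 1 < k + 2 := by omega
          simp [h1, hτdef]
        have hts := hstar τ hτ (fun _ => ∅) (fun _ => Set.empty_subset _) u huC hmem
        -- hts : tow G τ (k+1) u ∈ τ (k+1) = {T u}
        have hττ : τ (k + 1) = {T u} := by simp [hτdef]
        rw [hττ, Set.mem_singleton_iff] at hts
        -- tow G τ (k+1) u = jf G (τ k) (tow G τ k u) with τ k = {α0}
        have hτk : τ k = ({α0} : Set α) := by simp [hτdef]
        have hjt : G.j (τ k, tow G τ k u) = some (tow G τ (k + 1) u) :=
          (jf_spec hv ht (hτ k).1 (hτ k).2 (tow_mem hv ht hτ huC k)).1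
        rw [hts] at hjt
        -- T u is of the form j(∅, w)
        have hform : ∃ w, G.j (∅, w) = some (T u) := by
          rcases hca with ⟨_, hid⟩ | hform
          · exact ⟨α0, by rw [hid u]; exact hju⟩
          · exact hform u huC
        obtain ⟨w, hw⟩ := hform
        obtain ⟨h1, _⟩ := j_inj hv hjt hw
        rw [hτk] at h1
        exact absurd h1 (Set.singleton_ne_empty α0)
    · -- v > m : head variable free
      exfalso
      set τ : ℕ → Set α := fun _ => (∅ : Set α) with hτdef
      have hτ : ∀ i, (τ i).Finite ∧ τ i ⊆ G.carrier := fun i =>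
        ⟨Set.finite_empty, Set.empty_subset _⟩
      set ρ : ℕ → Set α := fun i => if i = v - (m + 1) then {T u} else ∅ with hρdef
      have hρ : ∀ i, ρ i ⊆ G.carrier := by
        intro i
        by_cases h : i = v - (m + 1) <;>
          simp [hρdef, h, Set.singleton_subset_iff.2 (hTC u huC), Set.empty_subset]
      have hmem : u ∈ interp G B
          (fun i => if i < m + 1 then τ i else ρ (i - (m + 1))) := by
        refine hTmem _ u huC ?_
        have h1 : ¬ v < m + 1 := by omega
        simp [h1, hρdef]
      have := hstar τ hτ ρ hρ u huC hmem
      simp [hτdef] at this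

end Aux

/-- In any graph model, a closed term whose interpretation is
below that of `I = λx.x` is either β-convertible to `I` or unsolvable. -/
theorem beta_eq_I_or_unsolvable {α : Type u} (G : PrePair α)
    (hG : PrePair.IsGraphModel G) (N : Term) (hN : Term.Closed N)
    (h : interpC G N ⊆ interpC G Term.Idt) :
    Term.BetaConv N Term.Idt ∨ Term.Unsolvable N := by
  by_cases hs : Term.Solvable N
  · left
    obtain ⟨H, hconv, hhnf⟩ := hs
    have hH : H = Term.Idt := by
      refine hnf_eq_Idt hG hhnf ?_
      intro ρ hρ
      rw [← conv_sound hG.1 hG.2.1 hconv ρ hρ, interp_closed hN ρ]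
      exact h
    rwa [hH] at hconv
  · right
    exact hs
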